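/- Let α ∈ (0,1), (m_k) integers with m_k ≥ 2, m̃_0 = 1, m̃_k = m_k^{m̃_{k-1}}, and let c_k, o_k be defined by c_1 = m_1, o_1 = 1, o_{k+1} = m_{k+1}^{⌊α·c_k⌋·o_k}, c_{k+1} = m̃_{k+1}/o_{k+1}. Then c_n → ∞ and ⌊α·c_n⌋·o_n/m̃_n → α as n → ∞. -/

import Mathlib

/-- For the construction sequences `c_k`, `o_k`, we have `c_n → ∞` and
`⌊α·c_n⌋·o_n / m̃_n → α`. -/
theorem stmt_19 (α : ℝ) (hα : α ∈ Set.Ioo (0 : ℝ) 1)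
    (m mt : ℕ → ℕ) (hm : ∀ k ≥ 1, 2 ≤ m k)
    (h0 : mt 0 = 1) (hrec : ∀ k ≥ 1, mt k = m k ^ mt (k - 1))
    (c o : ℕ → ℕ) (hc1 : c 1 = m 1) (ho1 : o 1 = 1)
    (ho : ∀ k ≥ 1, o (k + 1) = m (k + 1) ^ ((⌊α * (c k : ℝ)⌋).toNat * o k))
    (hc : ∀ k ≥ 1, c (k + 1) = mt (k + 1) / o (k + 1)) :
    Filter.Tendsto (fun n => (c n : ℝ)) Filter.atTop Filter.atTop ∧
    Filter.Tendsto (fun n => (⌊α * (c n : ℝ)⌋ : ℝ) * (o n : ℝ) / (mt n : ℝ))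
      Filter.atTop (nhds α) := by
  obtain ⟨hα0, hα1⟩ := hα
  have hm1 : ∀ k ≥ 1, 1 ≤ m k := fun k hk => le_trans one_le_two (hm k hk)
  -- mt k ≥ k + 1
  have hmt : ∀ k, 1 ≤ k → k + 1 ≤ mt k := by
    intro k hk
    induction k, hk using Nat.le_induction with
    | base =>
      have h1 := hrec 1 le_rfl
      simp only [Nat.sub_self, h0, pow_one] at h1
      rw [h1]; exact hm 1 le_rfl
    | succ n hn ih =>
      have h1 := hrec (n + 1) (by omega)
      simp only [Nat.add_sub_cancel] at h1
      calc n + 1 + 1 ≤ mt n + 1 := by omega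
        _ ≤ 2 ^ mt n := Nat.lt_two_pow_self (n := mt n)
        _ ≤ m (n + 1) ^ mt n := Nat.pow_le_pow_left (hm (n + 1) (by omega)) _
        _ = mt (n + 1) := h1.symm
  -- o k ≥ 1
  have hopos : ∀ k, 1 ≤ k → 1 ≤ o k := by
    intro k hk
    induction k, hk using Nat.le_induction with
    | base => rw [ho1]
    | succ n hn _ =>
      rw [ho n hn]
      exact Nat.one_le_pow _ _ (lt_of_lt_of_le one_pos (hm1 (n + 1) (by omega)))
  -- floor is nonneg and ≤ c k
  have htnn : ∀ k, ((((⌊α * (c k : ℝ)⌋).toNat : ℕ)) : ℝ) = ((⌊α * (c k : ℝ)⌋ : ℤ) : ℝ) := by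
    intro k
    have h1 : (0 : ℤ) ≤ ⌊α * (c k : ℝ)⌋ := by
      apply Int.floor_nonneg.mpr
      positivity
    exact_mod_cast Int.toNat_of_nonneg h1
  have ht : ∀ k, (⌊α * (c k : ℝ)⌋).toNat ≤ c k := by
    intro k
    apply Int.toNat_le.mpr
    have h1 : (⌊α * (c k : ℝ)⌋ : ℝ) ≤ α * (c k : ℝ) := Int.floor_le _
    have h2 : α * (c k : ℝ) ≤ (c k : ℝ) := by
      have : (0 : ℝ) ≤ (c k : ℝ) := Nat.cast_nonneg _
      nlinarith
    exact_mod_cast h1.trans h2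
  -- key : c k * o k = mt k
  have key : ∀ k, 1 ≤ k → c k * o k = mt k := by
    intro k hk
    induction k, hk using Nat.le_induction with
    | base =>
      have h1 := hrec 1 le_rfl
      simp only [Nat.sub_self, h0, pow_one] at h1
      rw [hc1, ho1, mul_one, h1]
    | succ n hn ih =>
      have hto : (⌊α * (c n : ℝ)⌋).toNat * o n ≤ mt n := by
        rw [← ih]; exact Nat.mul_le_mul_right _ (ht n)
      have hdvd : o (n + 1) ∣ mt (n + 1) := by
        have h1 := hrec (n + 1) (by omega)
        simp only [Nat.add_sub_cancel] at h1
        rw [ho n hn, h1]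
        exact pow_dvd_pow _ hto
      rw [hc n hn, Nat.div_mul_cancel hdvd]
  have hcpos : ∀ k, 1 ≤ k → 1 ≤ c k := by
    intro k hk
    rcases Nat.eq_zero_or_pos (c k) with h | h
    · exfalso
      have := key k hk
      rw [h, zero_mul] at this
      have := hmt k hk
      omega
    · exact h
  have hto : ∀ k, 1 ≤ k → (⌊α * (c k : ℝ)⌋).toNat * o k ≤ mt k := by
    intro k hk
    rw [← key k hk]
    exact Nat.mul_le_mul_right _ (ht k)
  -- formula for c (k+1)
  have cform : ∀ k, 1 ≤ k →
      c (k + 1) = m (k + 1) ^ (mt k - (⌊α * (c k : ℝ)⌋).toNat * o k) := by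
    intro k hk
    have h1 := hrec (k + 1) (by omega)
    simp only [Nat.add_sub_cancel] at h1
    rw [hc k hk, ho k hk, h1,
      Nat.pow_div (hto k hk) (lt_of_lt_of_le one_pos (hm1 (k + 1) (by omega)))]
  -- growth
  have growth : ∀ k : ℕ, 1 ≤ k → (1 - α) * ((k : ℝ) + 1) ≤ (c (k + 1) : ℝ) := by
    intro k hk
    set t := (⌊α * (c k : ℝ)⌋).toNat with htdef
    set e := mt k - t * o k with hedef
    have hcase : ((e : ℕ) : ℝ) = (mt k : ℝ) - ((t * o k : ℕ) : ℝ) := by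
      rw [hedef, Nat.cast_sub (hto k hk)]
    have hbound : (1 - α) * ((k : ℝ) + 1) ≤ (e : ℝ) := by
      have h1 : ((t * o k : ℕ) : ℝ) ≤ α * (mt k : ℝ) := by
        push_cast
        have h2 : (t : ℝ) ≤ α * (c k : ℝ) := by
          rw [htdef, htnn k]
          exact Int.floor_le _
        have h3 : (0 : ℝ) ≤ (o k : ℝ) := Nat.cast_nonneg _
        have h4 : ((c k : ℝ)) * (o k : ℝ) = (mt k : ℝ) := by
          exact_mod_cast key k hk
        nlinarith
      have h5 : ((k : ℝ) + 1) ≤ (mt k : ℝ) := by exact_mod_cast hmt k hk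
      have h6 : (0 : ℝ) ≤ 1 - α := by linarith
      nlinarith
    have hce : (e : ℕ) ≤ c (k + 1) := by
      rw [cform k hk]
      calc e ≤ 2 ^ e := Nat.le_of_lt (Nat.lt_two_pow_self (n := e))
        _ ≤ m (k + 1) ^ e := Nat.pow_le_pow_left (hm (k + 1) (by omega)) _
    calc (1 - α) * ((k : ℝ) + 1) ≤ (e : ℝ) := hbound
      _ ≤ (c (k + 1) : ℝ) := by exact_mod_cast hce
  -- part 1
  have part1 : Filter.Tendsto (fun n => (c n : ℝ)) Filter.atTop Filter.atTop := by
    apply Filter.tendsto_atTop_mono' Filter.atTop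
      (f₁ := fun n : ℕ => (1 - α) * (n : ℝ))
    · filter_upwards [Filter.eventually_ge_atTop 2] with n hn
      have h1 := growth (n - 1) (by omega)
      rw [Nat.sub_add_cancel (by omega : 1 ≤ n)] at h1
      have h2 : ((n - 1 : ℕ) : ℝ) + 1 = (n : ℝ) := by
        rw [Nat.cast_sub (by omega : 1 ≤ n)]; ring
      rw [h2] at h1
      exact h1
    · exact Filter.Tendsto.const_mul_atTop (by linarith)
        tendsto_natCast_atTop_atTop
  refine ⟨part1, ?_⟩
  -- part 2 : squeeze
  have hxeq : ∀ n, 1 ≤ n →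
      (⌊α * (c n : ℝ)⌋ : ℝ) * (o n : ℝ) / (mt n : ℝ)
        = (⌊α * (c n : ℝ)⌋ : ℝ) / (c n : ℝ) := by
    intro n hn
    have hc0 : (c n : ℝ) ≠ 0 := by
      have := hcpos n hn; positivity
    have ho0 : (o n : ℝ) ≠ 0 := by
      have := hopos n hn; positivity
    rw [← key n hn, Nat.cast_mul]
    field_simp
  have hupper : ∀ n, 1 ≤ n →
      (⌊α * (c n : ℝ)⌋ : ℝ) * (o n : ℝ) / (mt n : ℝ) ≤ α := by
    intro n hn
    rw [hxeq n hn]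
    have hc0 : (0 : ℝ) < (c n : ℝ) := by exact_mod_cast hcpos n hn
    rw [div_le_iff₀ hc0]
    calc (⌊α * (c n : ℝ)⌋ : ℝ) ≤ α * (c n : ℝ) := Int.floor_le _
      _ = α * (c n : ℝ) := rfl
  have hlower : ∀ n, 1 ≤ n →
      α - ((c n : ℝ))⁻¹ ≤ (⌊α * (c n : ℝ)⌋ : ℝ) * (o n : ℝ) / (mt n : ℝ) := by
    intro n hn
    rw [hxeq n hn]
    have hc0 : (0 : ℝ) < (c n : ℝ) := by exact_mod_cast hcpos n hn
    rw [le_div_iff₀ hc0]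
    have hfl : α * (c n : ℝ) - 1 < (⌊α * (c n : ℝ)⌋ : ℝ) := Int.sub_one_lt_floor _
    have hexp : (α - ((c n : ℝ))⁻¹) * (c n : ℝ) = α * (c n : ℝ) - 1 := by
      field_simp
    rw [hexp]
    linarith
  have hlowT : Filter.Tendsto (fun n => α - ((c n : ℝ))⁻¹) Filter.atTop (nhds α) := by
    have h0' : Filter.Tendsto (fun n => ((c n : ℝ))⁻¹) Filter.atTop (nhds 0) :=
      part1.inv_tendsto_atTop
    have := Filter.Tendsto.sub (tendsto_const_nhds (x := α) (f := Filter.atTop)) h0'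
    simpa using this
  apply tendsto_of_tendsto_of_tendsto_of_le_of_le' hlowT
    (tendsto_const_nhds (x := α))
  · filter_upwards [Filter.eventually_ge_atTop 1] with n hn
    exact hlower n hn
  · filter_upwards [Filter.eventually_ge_atTop 1] with n hn
    exact hupper n hn
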